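/- Let P_{U|X} and P_{V|X} be Markov kernels on finite alphabets, and suppose P_{U|X} is more informative than P_{V|X}, i.e., I(Y;U) ≥ I(Y;V) for every joint distribution P_{YX} inducing the Markov chain Y ↔ X ↔ (U,V). Then for any two distributions P_{X|Y=y₀}, P_{X|Y=y₁} on X, the induced output distributions satisfy KL(P_{U|Y=y₀} ‖ P_{U|Y=y₁}) ≥ KL(P_{V|Y=y₀} ‖ P_{V|Y=y₁}), where P_{U|Y=y} is the pushforward of P_{X|Y=y} through the kernel P_{U|X} and similarly for V. -/

import Mathlib

open Finset

/-- A probability vector on a finite set. -/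
def ProbFun {A : Type*} [Fintype A] (p : A → ℝ) : Prop :=
  (∀ a, 0 ≤ p a) ∧ ∑ a, p a = 1

/-- A joint probability on finite sets. -/
def JointFun {A B : Type*} [Fintype A] [Fintype B] (p : A → B → ℝ) : Prop :=
  (∀ a b, 0 ≤ p a b) ∧ ∑ a, ∑ b, p a b = 1

/-- A Markov kernel (stochastic matrix) from `A` to `B`. -/
def Kern {A B : Type*} [Fintype B] (K : A → B → ℝ) : Prop :=
  (∀ a b, 0 ≤ K a b) ∧ ∀ a, ∑ b, K a b = 1

/-- Composition of kernels: `(M ∘ K)(v|x) = ∑ u K(u|x) M(v|u)`. -/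
def kcomp {X U V : Type*} [Fintype U] (M : U → V → ℝ) (K : X → U → ℝ) : X → V → ℝ :=
  fun x v => ∑ u, K x u * M u v

/-- Pushforward of a distribution through a kernel. -/
def kpush {X U : Type*} [Fintype X] (K : X → U → ℝ) (q : X → ℝ) : U → ℝ :=
  fun u => ∑ x, q x * K x u

/-- Mutual information of a finite joint pmf. -/
noncomputable def MIfin {A B : Type*} [Fintype A] [Fintype B] (p : A → B → ℝ) : ℝ :=
  ∑ a, ∑ b, p a b * Real.log (p a b / ((∑ b', p a b') * (∑ a', p a' b)))

/-- Joint distribution of concept `Y` and embedding, for a joint `p` on `Y × X`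
and a channel `K` from `X` (this encodes the Markov chain `Y ↔ X ↔ U`). -/
def jointOut {Y X U : Type*} [Fintype X] (p : Y → X → ℝ) (K : X → U → ℝ) : Y → U → ℝ :=
  fun y u => ∑ x, p y x * K x u

/-- Total variation distance on a finite set. -/
noncomputable def tvDist {A : Type*} [Fintype A] (p q : A → ℝ) : ℝ :=
  (∑ a, |p a - q a|) / 2

/-- Bayes risk: infimum over randomized decision rules of the error probability. -/
noncomputable def bayesRisk {Y U : Type*} [Fintype Y] [Fintype U] (r : Y → U → ℝ) : ℝ :=
  sInf { e | ∃ ρ : U → Y → ℝ, Kern ρ ∧ e = 1 - ∑ y, ∑ u, r y u * ρ u y }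

/-- Le Cam deficiency of `KV` relative to `KU` under input distribution `pX`. -/
noncomputable def deficiency {X U V : Type*} [Fintype X] [Fintype U] [Fintype V]
    (pX : X → ℝ) (KU : X → U → ℝ) (KV : X → V → ℝ) : ℝ :=
  sInf { d | ∃ M : U → V → ℝ, Kern M ∧ d = ∑ x, pX x * tvDist (kcomp M KU x) (KV x) }

/-- Kullback–Leibler divergence on a finite set, `⊤` if absolute continuity fails. -/
noncomputable def KLfin {A : Type*} [Fintype A] (p q : A → ℝ) : EReal :=
  if ∀ a, q a = 0 → p a = 0 then ((∑ a, p a * Real.log (p a / q a) : ℝ) : EReal) else ⊤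


lemma plog_ge {p q : ℝ} (hp : 0 ≤ p) (hq : 0 ≤ q) (h : q = 0 → p = 0) :
    p - q ≤ p * Real.log (p / q) := by
  rcases eq_or_lt_of_le hp with h0 | h0
  · rw [← h0]; simp; linarith
  · have hq0 : 0 < q := by
      rcases eq_or_lt_of_le hq with h2 | h2
      · exact absurd (h h2.symm) (ne_of_gt h0)
      · exact h2
    have h2 : Real.log (q / p) ≤ q / p - 1 := Real.log_le_sub_one_of_pos (div_pos hq0 h0)
    have h3 : Real.log (p / q) = - Real.log (q / p) := by
      rw [← Real.log_inv]; congr 1; rw [inv_div]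
    have h4 : (1 : ℝ) - q / p ≤ Real.log (p / q) := by rw [h3]; linarith
    have h5 := mul_le_mul_of_nonneg_left h4 h0.le
    have h6 : p * (1 - q / p) = p - q := by field_simp
    linarith

section sums
variable {A : Type*} [Fintype A] (s0 s1 : A → ℝ) (lam : ℝ)

/-- B ≥ 0 -/
lemma sumB_ge (hs0 : ∀ a, 0 ≤ s0 a) (hs1 : ∀ a, 0 ≤ s1 a)
    (hsum0 : ∑ a, s0 a = 1) (hsum1 : ∑ a, s1 a = 1) (h0 : 0 < lam) (h1 : lam < 1) :
    0 ≤ ∑ a, s1 a * Real.log (s1 a / (lam * s0 a + (1 - lam) * s1 a)) := by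
  have key : ∀ a ∈ Finset.univ, s1 a - (lam * s0 a + (1 - lam) * s1 a)
      ≤ s1 a * Real.log (s1 a / (lam * s0 a + (1 - lam) * s1 a)) := by
    intro a _
    refine plog_ge (hs1 a) (by nlinarith [hs0 a, hs1 a]) (fun hm => ?_)
    nlinarith [hs0 a, hs1 a]
  have h2 := Finset.sum_le_sum key
  have h3 : ∑ a, (s1 a - (lam * s0 a + (1 - lam) * s1 a)) = 0 := by
    rw [Finset.sum_sub_distrib, Finset.sum_add_distrib, ← Finset.mul_sum, ← Finset.mul_sum,
      hsum0, hsum1]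
    ring
  linarith

/-- A ≥ KL - lam * C  under abs. continuity -/
lemma sumA_ge (hs0 : ∀ a, 0 ≤ s0 a) (hs1 : ∀ a, 0 ≤ s1 a)
    (h0 : 0 < lam) (h1 : lam < 1) (hac : ∀ a, s1 a = 0 → s0 a = 0) :
    (∑ a, s0 a * Real.log (s0 a / s1 a))
      - lam * ∑ a, (if s1 a = 0 then 0 else s0 a * (s0 a - s1 a) / s1 a)
      ≤ ∑ a, s0 a * Real.log (s0 a / (lam * s0 a + (1 - lam) * s1 a)) := by
  rw [Finset.mul_sum, ← Finset.sum_sub_distrib]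
  refine Finset.sum_le_sum fun a _ => ?_
  by_cases hz : s1 a = 0
  · simp [hz, hac a hz]
  · have hs1p : 0 < s1 a := lt_of_le_of_ne (hs1 a) (Ne.symm hz)
    rcases eq_or_lt_of_le (hs0 a) with hz0 | hs0p
    · simp [← hz0]
    · have hm : 0 < lam * s0 a + (1 - lam) * s1 a := by nlinarith
      have hlog : Real.log ((lam * s0 a + (1 - lam) * s1 a) / s1 a)
          ≤ lam * (s0 a - s1 a) / s1 a := by
        have := Real.log_le_sub_one_of_pos (div_pos hm hs1p)
        have e : (lam * s0 a + (1 - lam) * s1 a) / s1 a - 1 = lam * (s0 a - s1 a) / s1 a := by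
          field_simp; ring
        linarith
      rw [Real.log_div hs0p.ne' hz, Real.log_div hs0p.ne' hm.ne']
      rw [Real.log_div hm.ne' hz] at hlog
      have h5 := mul_le_mul_of_nonneg_left hlog hs0p.le
      have e2 : s0 a * (lam * (s0 a - s1 a) / s1 a) = lam * (s0 a * (s0 a - s1 a) / s1 a) := by
        ring
      simp only [if_neg hz]
      nlinarith [h5, e2]

/-- A ≤ KL + (lam/(1-lam)) * D  under abs continuity -/
lemma sumA_le (hs0 : ∀ a, 0 ≤ s0 a) (hs1 : ∀ a, 0 ≤ s1 a)
    (h0 : 0 < lam) (h1 : lam < 1) (hac : ∀ a, s1 a = 0 → s0 a = 0) :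
    ∑ a, s0 a * Real.log (s0 a / (lam * s0 a + (1 - lam) * s1 a))
      ≤ (∑ a, s0 a * Real.log (s0 a / s1 a))
        + lam / (1 - lam) * ∑ a, (if s1 a = 0 then 0 else s0 a * |s0 a - s1 a| / s1 a) := by
  rw [Finset.mul_sum, ← Finset.sum_add_distrib]
  refine Finset.sum_le_sum fun a _ => ?_
  by_cases hz : s1 a = 0
  · simp [hz, hac a hz]
  · have hs1p : 0 < s1 a := lt_of_le_of_ne (hs1 a) (Ne.symm hz)
    rcases eq_or_lt_of_le (hs0 a) with hz0 | hs0p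
    · simp [← hz0]
    · have hm : 0 < lam * s0 a + (1 - lam) * s1 a := by nlinarith
      have hmge : (1 - lam) * s1 a ≤ lam * s0 a + (1 - lam) * s1 a := by nlinarith
      have hlog : Real.log (s1 a / (lam * s0 a + (1 - lam) * s1 a))
          ≤ lam / (1 - lam) * (|s0 a - s1 a| / s1 a) := by
        have hle := Real.log_le_sub_one_of_pos (div_pos hs1p hm)
        have e : s1 a / (lam * s0 a + (1 - lam) * s1 a) - 1
            = lam * (s1 a - s0 a) / (lam * s0 a + (1 - lam) * s1 a) := by
          rw [div_sub_one hm.ne']; ring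
        have h2 : lam * (s1 a - s0 a) / (lam * s0 a + (1 - lam) * s1 a)
            ≤ lam * |s0 a - s1 a| / ((1 - lam) * s1 a) := by
          have hnum : lam * (s1 a - s0 a) ≤ lam * |s0 a - s1 a| := by
            have : s1 a - s0 a ≤ |s0 a - s1 a| := by
              rw [abs_sub_comm]; exact le_abs_self _
            nlinarith
          exact div_le_div₀ (by positivity) hnum (by nlinarith) hmge
        have e2 : lam * |s0 a - s1 a| / ((1 - lam) * s1 a)
            = lam / (1 - lam) * (|s0 a - s1 a| / s1 a) := by
          have h1m : (1 : ℝ) - lam ≠ 0 := ne_of_gt (by linarith)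
          field_simp
        linarith
      have hlogsplit : Real.log (s0 a / (lam * s0 a + (1 - lam) * s1 a))
          = Real.log (s0 a / s1 a) + Real.log (s1 a / (lam * s0 a + (1 - lam) * s1 a)) := by
        rw [Real.log_div hs0p.ne' hm.ne', Real.log_div hs0p.ne' hz,
          Real.log_div hz hm.ne']
        ring
      have h5 := mul_le_mul_of_nonneg_left hlog hs0p.le
      simp only [if_neg hz]
      have e3 : s0 a * (lam / (1 - lam) * (|s0 a - s1 a| / s1 a))
          = lam / (1 - lam) * (s0 a * |s0 a - s1 a| / s1 a) := by ring
      nlinarith [h5, e3, hlogsplit]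
end sums

section sums2
variable {A : Type*} [Fintype A] (s0 s1 : A → ℝ) (lam : ℝ)

/-- B ≤ lam^2/(1-lam) * E  under abs continuity -/
lemma sumB_le (hs0 : ∀ a, 0 ≤ s0 a) (hs1 : ∀ a, 0 ≤ s1 a)
    (hsum0 : ∑ a, s0 a = 1) (hsum1 : ∑ a, s1 a = 1)
    (h0 : 0 < lam) (h1 : lam < 1) (hac : ∀ a, s1 a = 0 → s0 a = 0) :
    ∑ a, s1 a * Real.log (s1 a / (lam * s0 a + (1 - lam) * s1 a))
      ≤ lam ^ 2 / (1 - lam) * ∑ a, (if s1 a = 0 then 0 else (s1 a - s0 a) ^ 2 / s1 a) := by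
  have key : ∀ a ∈ Finset.univ, s1 a * Real.log (s1 a / (lam * s0 a + (1 - lam) * s1 a))
      ≤ lam * (s1 a - s0 a)
        + lam ^ 2 / (1 - lam) * (if s1 a = 0 then 0 else (s1 a - s0 a) ^ 2 / s1 a) := by
    intro a _
    by_cases hz : s1 a = 0
    · simp [hz, hac a hz]
    · have hs1p : 0 < s1 a := lt_of_le_of_ne (hs1 a) (Ne.symm hz)
      have hm : 0 < lam * s0 a + (1 - lam) * s1 a := by nlinarith [hs0 a]
      have hmge : (1 - lam) * s1 a ≤ lam * s0 a + (1 - lam) * s1 a := by nlinarith [hs0 a]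
      have hle := Real.log_le_sub_one_of_pos (div_pos hs1p hm)
      have e : s1 a / (lam * s0 a + (1 - lam) * s1 a) - 1
          = lam * (s1 a - s0 a) / (lam * s0 a + (1 - lam) * s1 a) := by
        rw [div_sub_one hm.ne']; ring
      -- s1 * (lam*(s1-s0)/m) = lam*(s1-s0) + lam^2*(s1-s0)^2/m
      have e2 : s1 a * (lam * (s1 a - s0 a) / (lam * s0 a + (1 - lam) * s1 a))
          = lam * (s1 a - s0 a)
            + lam ^ 2 * (s1 a - s0 a) ^ 2 / (lam * s0 a + (1 - lam) * s1 a) := by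
        rw [mul_div_assoc', add_div' _ _ _ hm.ne']; congr 1; ring
      have h2 : lam ^ 2 * (s1 a - s0 a) ^ 2 / (lam * s0 a + (1 - lam) * s1 a)
          ≤ lam ^ 2 * (s1 a - s0 a) ^ 2 / ((1 - lam) * s1 a) := by
        exact div_le_div_of_nonneg_left (by positivity) (by nlinarith) hmge
      have e3 : lam ^ 2 * (s1 a - s0 a) ^ 2 / ((1 - lam) * s1 a)
          = lam ^ 2 / (1 - lam) * ((s1 a - s0 a) ^ 2 / s1 a) := by
        have h1m : (1 : ℝ) - lam ≠ 0 := ne_of_gt (by linarith)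
        field_simp
      have h5 := mul_le_mul_of_nonneg_left hle hs1p.le
      simp only [if_neg hz]
      nlinarith [h5, e2, e3, h2]
  have h2 := Finset.sum_le_sum key
  have h3 : ∑ a, (lam * (s1 a - s0 a)
      + lam ^ 2 / (1 - lam) * (if s1 a = 0 then 0 else (s1 a - s0 a) ^ 2 / s1 a))
      = lam ^ 2 / (1 - lam) * ∑ a, (if s1 a = 0 then 0 else (s1 a - s0 a) ^ 2 / s1 a) := by
    rw [Finset.sum_add_distrib, ← Finset.mul_sum, ← Finset.mul_sum,
      show (∑ i, (s1 i - s0 i)) = 0 from by rw [Finset.sum_sub_distrib, hsum0, hsum1]; ring]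
    ring
  linarith

/-- case B lower bound: A ≥ -c log lam - 1 -/
lemma sumA_ge_caseB [DecidableEq A] (hs0 : ∀ a, 0 ≤ s0 a) (hs1 : ∀ a, 0 ≤ s1 a)
    (hsum0 : ∑ a, s0 a = 1) (hsum1 : ∑ a, s1 a = 1)
    (h0 : 0 < lam) (h1 : lam < 1) (v : A) (hv1 : s1 v = 0) (hv0 : 0 < s0 v) :
    -(s0 v * Real.log lam) - 1
      ≤ ∑ a, s0 a * Real.log (s0 a / (lam * s0 a + (1 - lam) * s1 a)) := by
  set f : A → ℝ := fun a => s0 a * Real.log (s0 a / (lam * s0 a + (1 - lam) * s1 a)) with hf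
  have hsplit : ∑ a, f a = ∑ a ∈ Finset.univ.erase v, f a + f v :=
    (Finset.sum_erase_add _ _ (Finset.mem_univ v)).symm
  have hfv : f v = -(s0 v * Real.log lam) := by
    have : lam * s0 v + (1 - lam) * s1 v = lam * s0 v := by rw [hv1]; ring
    simp only [hf, this]
    have e : s0 v / (lam * s0 v) = lam⁻¹ := by
      field_simp [hv0.ne']
    rw [e, Real.log_inv]; ring
  have hrest : ∑ a ∈ Finset.univ.erase v, (s0 a - (lam * s0 a + (1 - lam) * s1 a))
      ≤ ∑ a ∈ Finset.univ.erase v, f a := by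
    refine Finset.sum_le_sum fun a _ => ?_
    refine plog_ge (hs0 a) (by nlinarith [hs0 a, hs1 a]) (fun hm => ?_)
    nlinarith [hs0 a, hs1 a]
  have hsum : ∑ a ∈ Finset.univ.erase v, (s0 a - (lam * s0 a + (1 - lam) * s1 a))
      = -(1 - lam) * s0 v := by
    have h4 : ∀ g : A → ℝ, ∑ a ∈ Finset.univ.erase v, g a = (∑ a, g a) - g v := by
      intro g
      rw [← Finset.sum_erase_add _ _ (Finset.mem_univ v)]; ring
    rw [h4]
    rw [Finset.sum_sub_distrib, Finset.sum_add_distrib, ← Finset.mul_sum, ← Finset.mul_sum,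
      hsum0, hsum1, hv1]
    ring
  have hc1 : s0 v ≤ 1 := by
    rw [← hsum0]
    exact Finset.single_le_sum (fun a _ => hs0 a) (Finset.mem_univ v)
  have : -(1 - lam) * s0 v ≥ -1 := by nlinarith
  linarith [hsplit, hfv, hrest, hsum]
end sums2

section kpushfacts
variable {X U : Type*} [Fintype X] [Fintype U]

lemma kpush_nonneg (K : X → U → ℝ) (hK : Kern K) (q : X → ℝ) (hq : ProbFun q) (u : U) :
    0 ≤ kpush K q u :=
  Finset.sum_nonneg fun x _ => mul_nonneg (hq.1 x) (hK.1 x u)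

lemma kpush_sum (K : X → U → ℝ) (hK : Kern K) (q : X → ℝ) (hq : ProbFun q) :
    ∑ u, kpush K q u = 1 := by
  unfold kpush
  rw [Finset.sum_comm]
  simp_rw [← Finset.mul_sum]
  calc ∑ x, q x * ∑ u, K x u = ∑ x, q x * 1 := by
        refine Finset.sum_congr rfl fun x _ => by rw [hK.2 x]
    _ = 1 := by simpa using hq.2

lemma MI_two (K : X → U → ℝ) (hK : Kern K)
    (q0 q1 : X → ℝ) (hq0 : ProbFun q0) (hq1 : ProbFun q1) {lam : ℝ}
    (h0 : 0 < lam) (h1 : lam < 1) :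
    MIfin (jointOut (fun (b : Bool) (x : X) => if b then lam * q0 x else (1 - lam) * q1 x) K) =
      lam * ∑ u, kpush K q0 u *
        Real.log (kpush K q0 u / (lam * kpush K q0 u + (1 - lam) * kpush K q1 u))
      + (1 - lam) * ∑ u, kpush K q1 u *
        Real.log (kpush K q1 u / (lam * kpush K q0 u + (1 - lam) * kpush K q1 u)) := by
  have hjo : jointOut (fun (b : Bool) (x : X) => if b then lam * q0 x else (1 - lam) * q1 x) K
      = fun b u => if b then lam * kpush K q0 u else (1 - lam) * kpush K q1 u := by
    funext b u
    cases b <;> simp [jointOut, kpush, Finset.mul_sum, mul_assoc]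
  unfold MIfin
  rw [hjo]
  rw [Fintype.sum_bool]
  simp only [Fintype.sum_bool, Bool.false_eq_true, if_true, if_false]
  have hr0 : ∑ u', lam * kpush K q0 u' = lam := by
    rw [← Finset.mul_sum, kpush_sum K hK q0 hq0, mul_one]
  have hr1 : ∑ u', (1 - lam) * kpush K q1 u' = 1 - lam := by
    rw [← Finset.mul_sum, kpush_sum K hK q1 hq1, mul_one]
  simp only [hr0, hr1]
  have key0 : ∀ u, lam * kpush K q0 u * Real.log (lam * kpush K q0 u /
        (lam * (lam * kpush K q0 u + (1 - lam) * kpush K q1 u)))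
      = lam * (kpush K q0 u * Real.log (kpush K q0 u /
        (lam * kpush K q0 u + (1 - lam) * kpush K q1 u))) := by
    intro u
    rw [mul_div_mul_left _ _ (ne_of_gt h0)]
    ring
  have key1 : ∀ u, (1 - lam) * kpush K q1 u * Real.log ((1 - lam) * kpush K q1 u /
        ((1 - lam) * (lam * kpush K q0 u + (1 - lam) * kpush K q1 u)))
      = (1 - lam) * (kpush K q1 u * Real.log (kpush K q1 u /
        (lam * kpush K q0 u + (1 - lam) * kpush K q1 u))) := by
    intro u
    rw [mul_div_mul_left _ _ (ne_of_gt (by linarith : (0:ℝ) < 1 - lam))]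
    ring
  simp only [key0, key1, ← Finset.mul_sum]
end kpushfacts

set_option maxHeartbeats 3000000 in
/-- more informative implies larger pairwise KL discrimination. -/
theorem stmt2 {X U V : Type*} [Fintype X] [Fintype U] [Fintype V]
    (KU : X → U → ℝ) (hKU : Kern KU) (KV : X → V → ℝ) (hKV : Kern KV)
    (hinfo : ∀ (Y : Type) [Fintype Y] (p : Y → X → ℝ), JointFun p →
      MIfin (jointOut p KV) ≤ MIfin (jointOut p KU))
    (q0 q1 : X → ℝ) (hq0 : ProbFun q0) (hq1 : ProbFun q1) :
    KLfin (kpush KV q0) (kpush KV q1) ≤ KLfin (kpush KU q0) (kpush KU q1) := by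
  classical
  have h0U : ∀ u, 0 ≤ kpush KU q0 u := kpush_nonneg KU hKU q0 hq0
  have h1U : ∀ u, 0 ≤ kpush KU q1 u := kpush_nonneg KU hKU q1 hq1
  have h0V : ∀ v, 0 ≤ kpush KV q0 v := kpush_nonneg KV hKV q0 hq0
  have h1V : ∀ v, 0 ≤ kpush KV q1 v := kpush_nonneg KV hKV q1 hq1
  have hsum0U : ∑ u, kpush KU q0 u = 1 := kpush_sum KU hKU q0 hq0
  have hsum1U : ∑ u, kpush KU q1 u = 1 := kpush_sum KU hKU q1 hq1
  have hsum0V : ∑ v, kpush KV q0 v = 1 := kpush_sum KV hKV q0 hq0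
  have hsum1V : ∑ v, kpush KV q1 v = 1 := kpush_sum KV hKV q1 hq1
  by_cases hU : ∀ u, kpush KU q1 u = 0 → kpush KU q0 u = 0
  swap
  · unfold KLfin; rw [if_neg hU]; exact le_top
  have hD : 0 ≤ ∑ u, (if kpush KU q1 u = 0 then 0
      else kpush KU q0 u * |kpush KU q0 u - kpush KU q1 u| / kpush KU q1 u) := by
    refine Finset.sum_nonneg fun u _ => ?_
    by_cases hz : kpush KU q1 u = 0
    · simp [hz]
    · simp only [if_neg hz]
      exact div_nonneg (mul_nonneg (h0U u) (abs_nonneg _)) (h1U u)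
  have hE : 0 ≤ ∑ u, (if kpush KU q1 u = 0 then 0
      else (kpush KU q1 u - kpush KU q0 u) ^ 2 / kpush KU q1 u) := by
    refine Finset.sum_nonneg fun u _ => ?_
    by_cases hz : kpush KU q1 u = 0
    · simp [hz]
    · simp only [if_neg hz]
      exact div_nonneg (sq_nonneg _) (h1U u)
  -- master bound
  have master : ∀ lam : ℝ, 0 < lam → lam ≤ 1/2 →
      lam * (∑ v, kpush KV q0 v *
          Real.log (kpush KV q0 v / (lam * kpush KV q0 v + (1 - lam) * kpush KV q1 v)))
        ≤ lam * (∑ u, kpush KU q0 u * Real.log (kpush KU q0 u / kpush KU q1 u))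
          + lam ^ 2 * (2 * (∑ u, (if kpush KU q1 u = 0 then 0
              else kpush KU q0 u * |kpush KU q0 u - kpush KU q1 u| / kpush KU q1 u))
            + 2 * (∑ u, (if kpush KU q1 u = 0 then 0
              else (kpush KU q1 u - kpush KU q0 u) ^ 2 / kpush KU q1 u))) := by
    intro lam hl hl2
    have hl1 : lam < 1 := by linarith
    have hJ : JointFun (fun (b : Bool) (x : X) => if b then lam * q0 x else (1 - lam) * q1 x) := by
      constructor
      · intro b x
        cases b
        · simp only [Bool.false_eq_true, if_false]
          exact mul_nonneg (by linarith) (hq1.1 x)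
        · simp only [if_true]
          exact mul_nonneg hl.le (hq0.1 x)
      · rw [Fintype.sum_bool]
        simp only [Bool.false_eq_true, if_true, if_false]
        rw [← Finset.mul_sum, ← Finset.mul_sum, hq0.2, hq1.2]
        ring
    have hI := hinfo Bool (fun (b : Bool) (x : X) =>
      if b then lam * q0 x else (1 - lam) * q1 x) hJ
    rw [MI_two KU hKU q0 q1 hq0 hq1 hl hl1, MI_two KV hKV q0 q1 hq0 hq1 hl hl1] at hI
    have hBV := sumB_ge (kpush KV q0) (kpush KV q1) lam h0V h1V hsum0V hsum1V hl hl1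
    have hBU0 := sumB_ge (kpush KU q0) (kpush KU q1) lam h0U h1U hsum0U hsum1U hl hl1
    have hAU := sumA_le (kpush KU q0) (kpush KU q1) lam h0U h1U hl hl1 hU
    have hBU := sumB_le (kpush KU q0) (kpush KU q1) lam h0U h1U hsum0U hsum1U hl hl1 hU
    have hfrac1 : lam / (1 - lam) ≤ 2 * lam := by
      rw [div_le_iff₀ (by linarith : (0:ℝ) < 1 - lam)]
      nlinarith
    have hfrac2 : lam ^ 2 / (1 - lam) ≤ 2 * lam ^ 2 := by
      rw [div_le_iff₀ (by linarith : (0:ℝ) < 1 - lam)]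
      nlinarith
    set AV := ∑ v, kpush KV q0 v *
        Real.log (kpush KV q0 v / (lam * kpush KV q0 v + (1 - lam) * kpush KV q1 v)) with hAVdef
    set BV := ∑ v, kpush KV q1 v *
        Real.log (kpush KV q1 v / (lam * kpush KV q0 v + (1 - lam) * kpush KV q1 v)) with hBVdef
    set AU := ∑ u, kpush KU q0 u *
        Real.log (kpush KU q0 u / (lam * kpush KU q0 u + (1 - lam) * kpush KU q1 u)) with hAUdef
    set BU := ∑ u, kpush KU q1 u *
        Real.log (kpush KU q1 u / (lam * kpush KU q0 u + (1 - lam) * kpush KU q1 u)) with hBUdef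
    set KLU := ∑ u, kpush KU q0 u * Real.log (kpush KU q0 u / kpush KU q1 u) with hKLUdef
    set D := ∑ u, (if kpush KU q1 u = 0 then 0
        else kpush KU q0 u * |kpush KU q0 u - kpush KU q1 u| / kpush KU q1 u) with hDdef
    set E := ∑ u, (if kpush KU q1 u = 0 then 0
        else (kpush KU q1 u - kpush KU q0 u) ^ 2 / kpush KU q1 u) with hEdef
    -- hI : lam * AV + (1-lam) * BV ≤ lam * AU + (1-lam) * BU
    -- hAU : AU ≤ KLU + lam/(1-lam) * D ; hBU : BU ≤ lam^2/(1-lam) * E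
    have t1 : lam / (1 - lam) * D ≤ 2 * lam * D :=
      mul_le_mul_of_nonneg_right hfrac1 hD
    have t2 : AU ≤ KLU + 2 * lam * D := by linarith
    have t3 := mul_le_mul_of_nonneg_left t2 hl.le
    have t4 : lam ^ 2 / (1 - lam) * E ≤ 2 * lam ^ 2 * E :=
      mul_le_mul_of_nonneg_right hfrac2 hE
    have t5 : BU ≤ 2 * lam ^ 2 * E := by linarith
    have t6 : (1 - lam) * BU ≤ BU := by nlinarith
    have t7 : 0 ≤ (1 - lam) * BV := mul_nonneg (by linarith) hBV
    nlinarith [t3, t5, t6, t7, hI]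
  by_cases hV : ∀ v, kpush KV q1 v = 0 → kpush KV q0 v = 0
  · -- both absolutely continuous: real KL inequality
    have key : ∀ lam : ℝ, 0 < lam → lam ≤ 1/2 →
        (∑ v, kpush KV q0 v * Real.log (kpush KV q0 v / kpush KV q1 v))
          ≤ (∑ u, kpush KU q0 u * Real.log (kpush KU q0 u / kpush KU q1 u))
            + lam * ((∑ v, (if kpush KV q1 v = 0 then 0
                else kpush KV q0 v * (kpush KV q0 v - kpush KV q1 v) / kpush KV q1 v))
              + (2 * (∑ u, (if kpush KU q1 u = 0 then 0
                  else kpush KU q0 u * |kpush KU q0 u - kpush KU q1 u| / kpush KU q1 u))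
                + 2 * (∑ u, (if kpush KU q1 u = 0 then 0
                  else (kpush KU q1 u - kpush KU q0 u) ^ 2 / kpush KU q1 u)))) := by
      intro lam hl hl2
      have hl1 : lam < 1 := by linarith
      have hAV := sumA_ge (kpush KV q0) (kpush KV q1) lam h0V h1V hl hl1 hV
      have hm := master lam hl hl2
      have h7 := mul_le_mul_of_nonneg_left hAV hl.le
      nlinarith [h7, hm]
    have hfinal : (∑ v, kpush KV q0 v * Real.log (kpush KV q0 v / kpush KV q1 v))
        ≤ ∑ u, kpush KU q0 u * Real.log (kpush KU q0 u / kpush KU q1 u) := by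
      apply le_of_forall_pos_le_add
      intro ε hε
      set G := (∑ v, (if kpush KV q1 v = 0 then 0
          else kpush KV q0 v * (kpush KV q0 v - kpush KV q1 v) / kpush KV q1 v))
        + (2 * (∑ u, (if kpush KU q1 u = 0 then 0
            else kpush KU q0 u * |kpush KU q0 u - kpush KU q1 u| / kpush KU q1 u))
          + 2 * (∑ u, (if kpush KU q1 u = 0 then 0
            else (kpush KU q1 u - kpush KU q0 u) ^ 2 / kpush KU q1 u))) with hGdef
      set M := max G 0 with hMdef
      have hM0 : 0 ≤ M := le_max_right _ _
      set lam := min (1/2 : ℝ) (ε / (M + 1)) with hlamdef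
      have hlp : 0 < lam :=
        lt_min (by norm_num) (div_pos hε (by linarith))
      have h5 := key lam hlp (min_le_left _ _)
      have h6 : lam * G ≤ lam * M :=
        mul_le_mul_of_nonneg_left (le_max_left _ _) hlp.le
      have h7 : lam * M ≤ ε := by
        calc lam * M ≤ (ε / (M + 1)) * M :=
              mul_le_mul_of_nonneg_right (min_le_right _ _) hM0
          _ ≤ ε := by
              rw [div_mul_eq_mul_div, div_le_iff₀ (by linarith : (0:ℝ) < M + 1)]
              nlinarith
      clear_value lam M G
      linarith
    unfold KLfin
    rw [if_pos hU, if_pos hV]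
    exact_mod_cast hfinal
  · exfalso
    push_neg at hV
    obtain ⟨v, hv1, hv0ne⟩ := hV
    have hv0 : 0 < kpush KV q0 v := lt_of_le_of_ne (h0V v) (Ne.symm hv0ne)
    set KLU := ∑ u, kpush KU q0 u * Real.log (kpush KU q0 u / kpush KU q1 u) with hKLUdef
    set F := 2 * (∑ u, (if kpush KU q1 u = 0 then 0
        else kpush KU q0 u * |kpush KU q0 u - kpush KU q1 u| / kpush KU q1 u))
      + 2 * (∑ u, (if kpush KU q1 u = 0 then 0
        else (kpush KU q1 u - kpush KU q0 u) ^ 2 / kpush KU q1 u)) with hFdef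
    have hF : 0 ≤ F := by rw [hFdef]; linarith
    clear_value KLU F
    have key : ∀ lam : ℝ, 0 < lam → lam ≤ 1/2 →
        -(kpush KV q0 v * Real.log lam) ≤ KLU + 1 + F := by
      intro lam hl hl2
      have hl1 : lam < 1 := by linarith
      have hAV := sumA_ge_caseB (kpush KV q0) (kpush KV q1) lam h0V h1V hsum0V hsum1V
        hl hl1 v hv1 hv0
      have hm := master lam hl hl2
      have h7 := mul_le_mul_of_nonneg_left hAV hl.le
      have h8 : lam * F ≤ F := by nlinarith
      nlinarith [h7, hm, h8, mul_pos hl hl]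
    set lam := min (1/2 : ℝ) (Real.exp (-(KLU + 1 + F + 1) / kpush KV q0 v)) with hlamdef
    have hlp : 0 < lam :=
      lt_min (by norm_num) (Real.exp_pos _)
    have hlog : Real.log lam ≤ -(KLU + 1 + F + 1) / kpush KV q0 v := by
      calc Real.log lam
          ≤ Real.log (Real.exp (-(KLU + 1 + F + 1) / kpush KV q0 v)) :=
            Real.log_le_log hlp (min_le_right _ _)
        _ = -(KLU + 1 + F + 1) / kpush KV q0 v := Real.log_exp _
    have h9 := key lam hlp (min_le_left _ _)
    have h10 := mul_le_mul_of_nonneg_left hlog hv0.le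
    have e : kpush KV q0 v * (-(KLU + 1 + F + 1) / kpush KV q0 v) = -(KLU + 1 + F + 1) := by
      field_simp
    clear_value lam
    linarith [h9, h10, e]
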